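/- The Fuss–Catalan numbers satisfy the identity C_{k+1}^{(d)} = \sum_{k_1+...+k_d = k} C_{k_1}^{(d)} ... C_{k_d}^{(d)}, where C_k^{(d)} = (1/(k(d-1)+1)) * binomial(dk, k). -/

import Mathlib

/-- Raney-type numbers. -/
def fcR (p n r : ℕ) : ℤ :=
  match n with
  | 0 => 1
  | m + 1 => ((p * m + p - 1 + r).choose (m + 1) : ℤ)
      - ((p : ℤ) - 1) * ((p * m + p - 1 + r).choose m)

lemma fcR_zero (p r : ℕ) : fcR p 0 r = 1 := rfl

lemma fcR_succ (p m r : ℕ) : fcR p (m + 1) r =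
    ((p * m + p - 1 + r).choose (m + 1) : ℤ)
      - ((p : ℤ) - 1) * ((p * m + p - 1 + r).choose m) := rfl

lemma choose_cast_key (N m : ℕ) (h : m ≤ N) :
    ((N.choose (m + 1) : ℤ)) * (m + 1) = (N.choose m : ℤ) * ((N : ℤ) - m) := by
  have := Nat.choose_succ_right_eq N m
  have h2 : ((N - m : ℕ) : ℤ) = (N : ℤ) - m := by
    rw [Nat.cast_sub h]
  have h3 : ((N.choose (m+1) * (m+1) : ℕ) : ℤ) = ((N.choose m * (N - m) : ℕ) : ℤ) := by
    exact_mod_cast congrArg (Nat.cast : ℕ → ℤ) this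
  push_cast at h3
  rw [h2] at h3
  linarith [h3]

lemma fcR_r_zero {p : ℕ} (hp : 2 ≤ p) (m : ℕ) : fcR p (m + 1) 0 = 0 := by
  rw [fcR_succ]
  set N := p * m + p - 1 + 0 with hNdef
  have hm : m ≤ N := by
    have : m + 1 ≤ p * m + p := by nlinarith
    omega
  have hNc : (N : ℤ) = p * m + p - 1 := by
    have : (((p * m + p) - 1 : ℕ) : ℤ) = ((p * m + p : ℕ) : ℤ) - 1 := by
      rw [Nat.cast_sub (by nlinarith : 1 ≤ p * m + p)]; norm_num
    rw [hNdef]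
    simp only [Nat.add_zero]
    rw [this]
    push_cast
    ring
  have key := choose_cast_key N m hm
  rw [hNc] at key
  have hcancel : ((N.choose (m + 1) : ℤ) - ((p : ℤ) - 1) * (N.choose m)) * (m + 1) = 0 := by
    linear_combination key
  have hne : ((m : ℤ) + 1) ≠ 0 := by positivity
  exact (mul_eq_zero.mp hcancel).resolve_right hne

example : True := trivial

lemma fcR_one {p : ℕ} (hp : 2 ≤ p) (r : ℕ) : fcR p 1 r = r := by
  rw [fcR_succ]
  have h1 : p * 0 + p - 1 + r = p - 1 + r := by omega
  rw [h1, Nat.choose_one_right, Nat.choose_zero_right]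
  have : ((p - 1 + r : ℕ) : ℤ) = (p : ℤ) - 1 + r := by omega
  rw [this]
  push_cast
  ring

lemma fcR_rec {p : ℕ} (hp : 2 ≤ p) (m r : ℕ) :
    fcR p (m + 1) (r + 1) = fcR p (m + 1) r + fcR p m (r + p) := by
  cases m with
  | zero =>
    rw [fcR_one hp, fcR_one hp, fcR_zero]
    push_cast
    ring
  | succ m' =>
    rw [fcR_succ, fcR_succ, fcR_succ]
    have h1 : p * (m' + 1) + p - 1 + (r + 1) = (p * m' + p - 1 + (r + p)) + 1 := by
      rw [Nat.mul_succ]; omega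
    have h2 : p * (m' + 1) + p - 1 + r = p * m' + p - 1 + (r + p) := by
      rw [Nat.mul_succ]; omega
    rw [h1, h2]
    set M := p * m' + p - 1 + (r + p) with hM
    rw [Nat.choose_succ_succ M (m' + 1), Nat.choose_succ_succ M m']
    push_cast
    ring

example : True := trivial

lemma fcR_conv {p : ℕ} (hp : 2 ≤ p) :
    ∀ n r s : ℕ, ∑ ij ∈ Finset.HasAntidiagonal.antidiagonal n, fcR p ij.1 r * fcR p ij.2 s
      = fcR p n (r + s) := by
  intro n
  induction n using Nat.strong_induction_on with
  | _ n ih =>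
    intro r
    induction r with
    | zero =>
      intro s
      rw [Finset.sum_eq_single_of_mem (0, n)
        (by simp [Finset.HasAntidiagonal.mem_antidiagonal])]
      · rw [fcR_zero]; ring_nf
      · rintro ⟨a, b⟩ hab hne
        rcases a with _ | a'
        · exfalso
          apply hne
          have := Finset.HasAntidiagonal.mem_antidiagonal.mp hab
          simp at this
          simp [this]
        · rw [fcR_r_zero hp]
          ring
    | succ r ihr =>
      intro s
      rcases n with _ | m
      · simp [fcR_zero]
      · rw [Finset.Nat.sum_antidiagonal_succ]
        have hsplit : ∀ ij : ℕ × ℕ, ij ∈ Finset.HasAntidiagonal.antidiagonal m →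
            fcR p (ij.1 + 1) (r + 1) * fcR p ij.2 s
              = fcR p (ij.1 + 1) r * fcR p ij.2 s + fcR p ij.1 (r + p) * fcR p ij.2 s := by
          intro ij _
          rw [fcR_rec hp]
          ring
        rw [Finset.sum_congr rfl hsplit, Finset.sum_add_distrib]
        have h2 : ∑ ij ∈ Finset.HasAntidiagonal.antidiagonal m, fcR p ij.1 (r + p) * fcR p ij.2 s
            = fcR p m (r + p + s) := ih m (Nat.lt_succ_self m) (r + p) s
        have h1 : fcR p 0 (r + 1) * fcR p (m + 1) s
              + ∑ ij ∈ Finset.HasAntidiagonal.antidiagonal m, fcR p (ij.1 + 1) r * fcR p ij.2 s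
            = fcR p (m + 1) (r + s) := by
          rw [fcR_zero, ← ihr s, Finset.Nat.sum_antidiagonal_succ
            (f := fun ij => fcR p ij.1 r * fcR p ij.2 s), fcR_zero]
        have h3 : fcR p (m + 1) (r + 1 + s) = fcR p (m + 1) (r + s) + fcR p m (r + s + p) := by
          have := fcR_rec hp m (r + s)
          rwa [show r + s + 1 = r + 1 + s by omega] at this
        have h4 : r + p + s = r + s + p := by omega
        rw [h3, ← h1, ← h4, ← h2]
        ring

example : True := trivial

lemma sum_antidiagonalTuple_succ {M : Type*} [AddCommMonoid M] (d k : ℕ)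
    (f : (Fin (d + 1) → ℕ) → M) :
    ∑ v ∈ Finset.Nat.antidiagonalTuple (d + 1) k, f v
      = ∑ ab ∈ Finset.HasAntidiagonal.antidiagonal k, ∑ w ∈ Finset.Nat.antidiagonalTuple d ab.2,
          f (Fin.cons ab.1 w) := by
  have hs : ∑ x ∈ (Finset.HasAntidiagonal.antidiagonal k).sigma
      (fun ab => Finset.Nat.antidiagonalTuple d ab.2), f (Fin.cons x.1.1 x.2)
      = ∑ ab ∈ Finset.HasAntidiagonal.antidiagonal k, ∑ w ∈ Finset.Nat.antidiagonalTuple d ab.2,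
          f (Fin.cons ab.1 w) := Finset.sum_sigma _ _ _
  rw [← hs]
  apply Finset.sum_bij'
    (i := fun v _ => (⟨(v 0, k - v 0), Fin.tail v⟩ :
      Σ _ab : ℕ × ℕ, Fin d → ℕ))
    (j := fun x _ => Fin.cons x.1.1 x.2)
  case hi =>
    intro v hv
    rw [Finset.Nat.mem_antidiagonalTuple] at hv
    have hsum : v 0 + ∑ i : Fin d, Fin.tail v i = k := by
      rw [← hv, Fin.sum_univ_succ]
      rfl
    rw [Finset.mem_sigma, Finset.HasAntidiagonal.mem_antidiagonal, Finset.Nat.mem_antidiagonalTuple]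
    dsimp only
    exact ⟨by omega, by omega⟩
  case hj =>
    intro x hx
    rw [Finset.mem_sigma, Finset.HasAntidiagonal.mem_antidiagonal, Finset.Nat.mem_antidiagonalTuple] at hx
    rw [Finset.Nat.mem_antidiagonalTuple, Fin.sum_cons, hx.2, hx.1]
  case left_neg =>
    intro v hv
    exact Fin.cons_self_tail v
  case right_neg =>
    intro x hx
    rw [Finset.mem_sigma, Finset.HasAntidiagonal.mem_antidiagonal, Finset.Nat.mem_antidiagonalTuple] at hx
    refine Sigma.ext ?_ ?_
    · simp only [Fin.cons_zero, Fin.tail_cons]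
      have : k - x.1.1 = x.1.2 := by omega
      rw [this]
    · simp only [Fin.cons_zero, Fin.tail_cons]
      exact HEq.rfl
  case h =>
    intro v hv
    simp only [Fin.cons_zero, Fin.tail_cons]
    rw [Fin.cons_self_tail]

example : True := trivial

lemma fcR_tuple_conv {p : ℕ} (hp : 2 ≤ p) :
    ∀ d k : ℕ, ∑ v ∈ Finset.Nat.antidiagonalTuple d k, ∏ i : Fin d, fcR p (v i) 1
      = fcR p k d := by
  intro d
  induction d with
  | zero =>
    intro k
    rcases k with _ | m
    · rw [Finset.Nat.antidiagonalTuple_zero_zero]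
      simp [fcR_zero]
    · rw [Finset.Nat.antidiagonalTuple_zero_succ]
      rw [fcR_r_zero hp]
      simp
  | succ d ih =>
    intro k
    rw [sum_antidiagonalTuple_succ d k (fun v => ∏ i : Fin (d + 1), fcR p (v i) 1)]
    have hstep : ∀ ab : ℕ × ℕ, ab ∈ Finset.HasAntidiagonal.antidiagonal k →
        (∑ w ∈ Finset.Nat.antidiagonalTuple d ab.2,
          ∏ i : Fin (d + 1), fcR p ((Fin.cons ab.1 w : Fin (d+1) → ℕ) i) 1)
        = fcR p ab.1 1 * fcR p ab.2 d := by
      intro ab _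
      have : ∀ w : Fin d → ℕ, (∏ i : Fin (d + 1), fcR p ((Fin.cons ab.1 w : Fin (d+1) → ℕ) i) 1)
          = fcR p ab.1 1 * ∏ i : Fin d, fcR p (w i) 1 := by
        intro w
        rw [Fin.prod_univ_succ]
        simp [Fin.cons_zero, Fin.cons_succ]
      rw [Finset.sum_congr rfl (fun w _ => this w), ← Finset.mul_sum, ih ab.2]
    rw [Finset.sum_congr rfl hstep, fcR_conv hp k 1 d]
    rw [show 1 + d = d + 1 by omega]

example : True := trivial

lemma fcR_mul {p : ℕ} (hp : 2 ≤ p) (k : ℕ) :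
    ((k * (p - 1) + 1 : ℕ) : ℤ) * fcR p k 1 = ((p * k).choose k : ℤ) := by
  rcases k with _ | m
  · simp [fcR_zero]
  · rw [fcR_succ]
    have hidx : p * m + p - 1 + 1 = p * (m + 1) := by
      rw [Nat.mul_succ]; omega
    rw [hidx]
    have hm : m ≤ p * (m + 1) := by nlinarith
    have key := choose_cast_key (p * (m + 1)) m hm
    have hc : (((m + 1) * (p - 1) + 1 : ℕ) : ℤ) = (p : ℤ) * (m + 1) - m := by
      rw [Nat.cast_add, Nat.cast_mul, Nat.cast_sub (by omega : 1 ≤ p)]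
      push_cast
      ring
    rw [hc]
    push_cast at key ⊢
    linear_combination ((p : ℤ) - 1) * key

lemma fcR_div {p : ℕ} (hp : 2 ≤ p) (k : ℕ) :
    (((p * k).choose k / (k * (p - 1) + 1) : ℕ) : ℤ) = fcR p k 1 := by
  have hmul := fcR_mul hp k
  have hb : 0 < k * (p - 1) + 1 := Nat.succ_pos _
  have hbZ : (0 : ℤ) < ((k * (p - 1) + 1 : ℕ) : ℤ) := by exact_mod_cast hb
  have hnn : 0 ≤ fcR p k 1 := by
    have h0 : (0 : ℤ) ≤ ((k * (p - 1) + 1 : ℕ) : ℤ) * fcR p k 1 := by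
      rw [hmul]; positivity
    nlinarith
  obtain ⟨t, ht⟩ : ∃ t : ℕ, fcR p k 1 = t :=
    ⟨(fcR p k 1).toNat, (Int.toNat_of_nonneg hnn).symm⟩
  rw [ht] at hmul ⊢
  have hdiv : (p * k).choose k = (k * (p - 1) + 1) * t := by exact_mod_cast hmul.symm
  rw [hdiv, Nat.mul_div_cancel_left _ hb]

/-- The Fuss–Catalan numbers `C_k^{(d)} = (1/(k(d-1)+1)) * binomial (d*k) k` satisfy
`C_{k+1}^{(d)} = ∑_{k₁+⋯+k_d = k} C_{k₁}^{(d)} ⋯ C_{k_d}^{(d)}`. -/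
theorem fussCatalan_identity (d : ℕ) (hd : 2 ≤ d) (k : ℕ) :
    (d * (k + 1)).choose (k + 1) / ((k + 1) * (d - 1) + 1) =
      ∑ v ∈ Finset.Nat.antidiagonalTuple d k,
        ∏ i : Fin d, (d * v i).choose (v i) / (v i * (d - 1) + 1) := by
  have hL := fcR_div hd (k + 1)
  have hmid : fcR d (k + 1) 1 = fcR d k d := by
    have h := fcR_rec hd k 0
    rw [fcR_r_zero hd] at h
    simpa using h
  have hR : ((∑ v ∈ Finset.Nat.antidiagonalTuple d k,
      ∏ i : Fin d, (d * v i).choose (v i) / (v i * (d - 1) + 1) : ℕ) : ℤ)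
      = fcR d k d := by
    push_cast
    rw [← fcR_tuple_conv hd d k]
    exact Finset.sum_congr rfl fun v _ => Finset.prod_congr rfl fun i _ => fcR_div hd (v i)
  exact_mod_cast hL.trans (hmid.trans hR.symm)
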